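/- (Theorem 4.4, part (iii)) Consider a lattice spin model with finite spin space S endowed with the discrete topology and the counting measure, whose interaction potential Φ is translation invariant, absolutely summable, non-constant and positively correlated, and assume the pressure ψ is differentiable on (0,∞). Let a < b be as in Theorem 4.4(i)-(ii), so that σ = s on (a,b) and σ' : (a,b) → (0,∞) and ψ' : (0,∞) → (a,b) are mutually inverse. Then for every β > 0 with u := ψ'(β): the system undergoes a second-order phase transition at β (i.e. ψ is differentiable but not twice differentiable at β) if and only if σ is not twice differentiable at u or σ''(u) = 0. Moreover, if ψ is twice differentiable at β and σ is twice differentiable at u, then ψ''(β) σ''(u) = 1. -/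

import Mathlib

open Filter Topology

/-- The lattice `ℤ^d`. -/
abbrev Zd (d : ℕ) := Fin d → ℤ

/-- The configuration space `Ω_Λ = S^Λ` for a finite `Λ ⊆ ℤ^d`. -/
abbrev Config (S : Type) {d : ℕ} (Λ : Finset (Zd d)) : Type := {x // x ∈ Λ} → S

/-- Restriction of a configuration on `Λ` to a subset `A ⊆ Λ`. -/
def restrictCfg {S : Type} {d : ℕ} {Λ A : Finset (Zd d)} (h : A ⊆ Λ) (ω : Config S Λ) :
    Config S A := fun a => ω ⟨a.1, h a.2⟩

/-- An interaction potential: a function `Φ_A : Ω_A → ℝ` for each finite `A ⊆ ℤ^d`. -/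
abbrev Pot (d : ℕ) (S : Type) := (A : Finset (Zd d)) → Config S A → ℝ

/-- The sup norm `‖Φ_A‖_∞`. -/
noncomputable def potNorm {d : ℕ} {S : Type} [Fintype S] [Nonempty S] (Φ : Pot d S)
    (A : Finset (Zd d)) : ℝ := ⨆ ω : Config S A, |Φ A ω|

/-- Translate of a finite set: `A + x`. -/
def shiftSet {d : ℕ} (x : Zd d) (A : Finset (Zd d)) : Finset (Zd d) := A.image (· + x)

/-- Translation invariance of a potential. -/
def TransInv {d : ℕ} {S : Type} (Φ : Pot d S) : Prop :=
  ∀ (x : Zd d) (A : Finset (Zd d)) (ω : Config S (shiftSet x A)),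
    Φ (shiftSet x A) ω = Φ A (fun a => ω ⟨a.1 + x, Finset.mem_image_of_mem _ a.2⟩)

/-- Absolute summability: `Σ_{A ∋ 0} ‖Φ_A‖ < ∞`. -/
def AbsSummable {d : ℕ} {S : Type} [Fintype S] [Nonempty S] (Φ : Pot d S) : Prop :=
  Summable (fun A : {A : Finset (Zd d) // (0 : Zd d) ∈ A} => potNorm Φ A.1)

/-- `‖Φ‖ = Σ_{A ∋ 0} ‖Φ_A‖`. -/
noncomputable def potFullNorm {d : ℕ} {S : Type} [Fintype S] [Nonempty S] (Φ : Pot d S) : ℝ :=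
  ∑' A : {A : Finset (Zd d) // (0 : Zd d) ∈ A}, potNorm Φ A.1

/-- The Hamiltonian `H_Λ(ω) = Σ_{A ⊆ Λ} Φ_A(ω_A)`. -/
noncomputable def Ham {d : ℕ} {S : Type} (Φ : Pot d S) (Λ : Finset (Zd d))
    (ω : Config S Λ) : ℝ :=
  ∑ A ∈ Λ.powerset.attach, Φ A.1 (restrictCfg (Finset.mem_powerset.mp A.2) ω)

/-- The hypercube `Λ_n = [-n, n]^d ∩ ℤ^d`. -/
noncomputable def cube (d n : ℕ) : Finset (Zd d) := Fintype.piFinset fun _ => Finset.Icc (-(n : ℤ)) n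

/-- Energy per site `h_n(ω) = H_n(ω)/|Λ_n|`. -/
noncomputable def enDensity {d : ℕ} {S : Type} (Φ : Pot d S) (n : ℕ)
    (ω : Config S (cube d n)) : ℝ := Ham Φ (cube d n) ω / (cube d n).card

/-- `𝕄_n(B) = #{ω ∈ Ω_n : h_n(ω) ∈ B}`. -/
noncomputable def Mcount {d : ℕ} {S : Type} [Fintype S] (Φ : Pot d S) (n : ℕ)
    (B : Set ℝ) : ℕ := Nat.card {ω : Config S (cube d n) // enDensity Φ n ω ∈ B}

/-- The sequence `(1/|Λ_n|) log 𝕄_n(B)`, with the convention `log 0 = -∞`. -/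
noncomputable def mSeq {d : ℕ} {S : Type} [Fintype S] (Φ : Pot d S) (B : Set ℝ)
    (n : ℕ) : EReal :=
  if Mcount Φ n B = 0 then ⊥
  else ((Real.log (Mcount Φ n B) / (cube d n).card : ℝ) : EReal)

/-- `m(B) = lim_n (1/|Λ_n|) log 𝕄_n(B)` (defined via `limsup`; the content that this is
an actual limit is asserted in the theorems). -/
noncomputable def mFun {d : ℕ} {S : Type} [Fintype S] (Φ : Pot d S) (B : Set ℝ) : EReal :=
  Filter.limsup (mSeq Φ B) Filter.atTop

/-- The microcanonical entropy `s(u) = lim_{r→0⁺} m((u-r, u+r))` (defined via `limsup`). -/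
noncomputable def entropy {d : ℕ} {S : Type} [Fintype S] (Φ : Pot d S) (u : ℝ) : EReal :=
  Filter.limsup (fun r : ℝ => mFun Φ (Set.Ioo (u - r) (u + r))) (nhdsWithin 0 (Set.Ioi 0))

/-- The partition function `Z_{Λ,β}`. -/
noncomputable def Zfun {d : ℕ} {S : Type} [Fintype S] (Φ : Pot d S) (Λ : Finset (Zd d))
    (β : ℝ) : ℝ := ∑ ω : Config S Λ, Real.exp (-β * Ham Φ Λ ω)

/-- The finite-volume pressure `ψ_Λ(β) = -(1/|Λ|) log Z_{Λ,β}`. -/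
noncomputable def pressureFin {d : ℕ} {S : Type} [Fintype S] (Φ : Pot d S)
    (Λ : Finset (Zd d)) (β : ℝ) : ℝ := -Real.log (Zfun Φ Λ β) / Λ.card

/-- The pressure sequence `-(1/|Λ_n|) log Z_{Λ_n,β}`. -/
noncomputable def pressureSeq {d : ℕ} {S : Type} [Fintype S] (Φ : Pot d S) (β : ℝ)
    (n : ℕ) : ℝ := pressureFin Φ (cube d n) β

/-- Gibbs expectation `⟨f⟩_{Λ,β}`. -/
noncomputable def gibbsExp {d : ℕ} {S : Type} [Fintype S] (Φ : Pot d S)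
    (Λ : Finset (Zd d)) (β : ℝ) (f : Config S Λ → ℝ) : ℝ :=
  (∑ ω : Config S Λ, f ω * Real.exp (-β * Ham Φ Λ ω)) / Zfun Φ Λ β

/-- Gibbs variance `Var_{Λ,β}(f)`. -/
noncomputable def gibbsVar {d : ℕ} {S : Type} [Fintype S] (Φ : Pot d S)
    (Λ : Finset (Zd d)) (β : ℝ) (f : Config S Λ → ℝ) : ℝ :=
  gibbsExp Φ Λ β (fun ω => (f ω) ^ 2) - (gibbsExp Φ Λ β f) ^ 2

/-- Gibbs covariance `Cov_{Λ,β}(f,g)`. -/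
noncomputable def gibbsCov {d : ℕ} {S : Type} [Fintype S] (Φ : Pot d S)
    (Λ : Finset (Zd d)) (β : ℝ) (f g : Config S Λ → ℝ) : ℝ :=
  gibbsExp Φ Λ β (fun ω => f ω * g ω) - gibbsExp Φ Λ β f * gibbsExp Φ Λ β g

/-- Gibbs probability `μ_{Λ,β}(E)`. -/
noncomputable def gibbsProb {d : ℕ} {S : Type} [Fintype S] (Φ : Pot d S)
    (Λ : Finset (Zd d)) (β : ℝ) (E : Set (Config S Λ)) : ℝ :=
  (∑ ω : Config S Λ, E.indicator (fun ω => Real.exp (-β * Ham Φ Λ ω)) ω) / Zfun Φ Λ β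

/-- Positive correlation of the potential. -/
def PosCorr {d : ℕ} {S : Type} [Fintype S] (Φ : Pot d S) : Prop :=
  ∀ (Λ A B : Finset (Zd d)) (hA : A ⊆ Λ) (hB : B ⊆ Λ) (β : ℝ), 0 < β →
    0 ≤ gibbsCov Φ Λ β (fun ω => Φ A (restrictCfg hA ω)) (fun ω => Φ B (restrictCfg hB ω))

/-- `#M_n(u) = #{ω ∈ Ω_n : H_n(ω) ≤ |Λ_n| u}`. -/
noncomputable def MvolCount {d : ℕ} {S : Type} [Fintype S] (Φ : Pot d S) (n : ℕ)
    (u : ℝ) : ℕ :=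
  Nat.card {ω : Config S (cube d n) // Ham Φ (cube d n) ω ≤ (cube d n).card * u}

/-- The sequence `(1/|Λ_n|) log #M_n(u)`, with the convention `log 0 = -∞`. -/
noncomputable def sigmaSeq {d : ℕ} {S : Type} [Fintype S] (Φ : Pot d S) (u : ℝ)
    (n : ℕ) : EReal :=
  if MvolCount Φ n u = 0 then ⊥
  else ((Real.log (MvolCount Φ n u) / (cube d n).card : ℝ) : EReal)

/-- `σ(u) = lim_n (1/|Λ_n|) log #M_n(u)` (defined via `limsup`). -/
noncomputable def sigmaFun {d : ℕ} {S : Type} [Fintype S] (Φ : Pot d S) (u : ℝ) : EReal :=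
  Filter.limsup (sigmaSeq Φ u) Filter.atTop
section Aux
open Filter Topology Finset

variable {d : ℕ} {S : Type} [Fintype S] [Nonempty S]

lemma Zfun_pos (Φ : Pot d S) (Λ : Finset (Zd d)) (β : ℝ) : 0 < Zfun Φ Λ β :=
  Finset.sum_pos (fun _ _ => Real.exp_pos _) Finset.univ_nonempty

lemma potNorm_nonneg (Φ : Pot d S) (A : Finset (Zd d)) : 0 ≤ potNorm Φ A :=
  Real.iSup_nonneg fun ω => abs_nonneg _

lemma abs_le_potNorm (Φ : Pot d S) (A : Finset (Zd d)) (ω : Config S A) :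
    |Φ A ω| ≤ potNorm Φ A := by
  unfold potNorm
  exact le_ciSup (f := fun ω : Config S A => |Φ A ω|)
    (Set.Finite.bddAbove (Set.finite_range _)) ω

lemma potFullNorm_nonneg (Φ : Pot d S) : 0 ≤ potFullNorm Φ :=
  tsum_nonneg fun _ => potNorm_nonneg Φ _

/-- The equivalence between configurations on `A` and on `A + x`. -/
noncomputable def shiftEquiv (x : Zd d) (A : Finset (Zd d)) :
    Config S A ≃ Config S (shiftSet x A) where
  toFun := fun σ b => σ ⟨b.1 - x, by
    obtain ⟨a, ha, hax⟩ := Finset.mem_image.mp b.2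
    simpa [← hax] using ha⟩
  invFun := fun ω a => ω ⟨a.1 + x, Finset.mem_image_of_mem _ a.2⟩
  left_inv := by
    intro σ; funext a; exact congrArg σ (Subtype.ext (add_sub_cancel_right a.1 x))
  right_inv := by
    intro ω; funext b; exact congrArg ω (Subtype.ext (sub_add_cancel b.1 x))

lemma ciSup_equiv {α β : Type} [Nonempty α] [Finite β] (e : α ≃ β) (f : β → ℝ) :
    ⨆ a : α, f (e a) = ⨆ b : β, f b := by
  have : Nonempty β := Nonempty.map e ‹_›
  have : Finite α := Finite.of_equiv _ e.symm
  apply le_antisymm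
  · exact ciSup_le fun a => le_ciSup (Set.Finite.bddAbove (Set.finite_range _)) (e a)
  · refine ciSup_le fun b => ?_
    have h : f b = f (e (e.symm b)) := by simp
    rw [h]
    exact le_ciSup (f := fun a : α => f (e a))
      (Set.Finite.bddAbove (Set.finite_range _)) (e.symm b)

lemma potNorm_shift {Φ : Pot d S} (hTI : TransInv Φ) (x : Zd d) (A : Finset (Zd d)) :
    potNorm Φ (shiftSet x A) = potNorm Φ A := by
  unfold potNorm
  have h1 : ∀ ω : Config S (shiftSet x A),
      |Φ (shiftSet x A) ω| = |Φ A ((shiftEquiv x A).symm ω)| := by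
    intro ω; rw [hTI x A ω]; rfl
  calc (⨆ ω : Config S (shiftSet x A), |Φ (shiftSet x A) ω|)
      = ⨆ ω : Config S (shiftSet x A), |Φ A ((shiftEquiv x A).symm ω)| := by
        exact congrArg iSup (funext h1)
    _ = ⨆ τ : Config S A, |Φ A τ| :=
        ciSup_equiv (shiftEquiv x A).symm (fun τ => |Φ A τ|)

lemma sum_potNorm_le {Φ : Pot d S} (hTI : TransInv Φ) (hAS : AbsSummable Φ) (p : Zd d)
    (s : Finset (Finset (Zd d))) (hs : ∀ B ∈ s, p ∈ B) :
    ∑ B ∈ s, potNorm Φ B ≤ potFullNorm Φ := by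
  classical
  have hinj : Function.Injective (fun B : Finset (Zd d) => shiftSet (-p) B) := by
    intro B C h
    have := Finset.image_injective (f := (· + (-p))) (fun u v huv => by
      simpa using congrArg (· + p) huv)
    exact this h
  set t : Finset {A : Finset (Zd d) // (0 : Zd d) ∈ A} :=
    s.attach.map ⟨fun B => ⟨shiftSet (-p) B.1, by
        simpa [shiftSet] using Finset.mem_image_of_mem (· + (-p)) (hs B.1 B.2)⟩,
      by intro B C h; exact Subtype.ext (hinj (congrArg Subtype.val h))⟩ with ht
  have h1 : ∑ B ∈ s, potNorm Φ B = ∑ A ∈ t, potNorm Φ A.1 := by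
    rw [ht, Finset.sum_map]
    rw [← Finset.sum_attach s (fun B => potNorm Φ B)]
    exact Finset.sum_congr rfl fun B _ => (potNorm_shift hTI (-p) B.1).symm
  rw [h1]
  exact Summable.sum_le_tsum t (fun _ _ => potNorm_nonneg Φ _) hAS

end Aux
section Aux2
open Filter Topology Finset

variable {d : ℕ} {S : Type} [Fintype S] [Nonempty S]

lemma restrictCfg_eq_of_agree {Λ B A : Finset (Zd d)} (hB : B ⊆ Λ)
    (ω ω' : Config S Λ) (hagree : ∀ i : {x // x ∈ Λ}, i.1 ∉ A → ω i = ω' i)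
    (hdisj : ∀ p ∈ B, p ∉ A) :
    restrictCfg hB ω = restrictCfg hB ω' := by
  funext i
  exact hagree ⟨i.1, hB i.2⟩ (hdisj i.1 i.2)

lemma Ham_diff_le {Φ : Pot d S} (hTI : TransInv Φ) (hAS : AbsSummable Φ)
    {Λ A : Finset (Zd d)} (hA : A ⊆ Λ) (ω ω' : Config S Λ)
    (hagree : ∀ i : {x // x ∈ Λ}, i.1 ∉ A → ω i = ω' i) :
    |Ham Φ Λ ω - Ham Φ Λ ω'| ≤ 2 * A.card * potFullNorm Φ := by
  classical
  unfold Ham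
  rw [← Finset.sum_sub_distrib]
  refine le_trans (Finset.abs_sum_le_sum_abs _ _) ?_
  have hterm : ∀ B : {B // B ∈ Λ.powerset},
      |Φ B.1 (restrictCfg (Finset.mem_powerset.mp B.2) ω)
        - Φ B.1 (restrictCfg (Finset.mem_powerset.mp B.2) ω')| ≤
      (if (B.1 ∩ A).Nonempty then 2 * potNorm Φ B.1 else 0) := by
    intro B
    by_cases hne : (B.1 ∩ A).Nonempty
    · rw [if_pos hne]
      calc _ ≤ |Φ B.1 (restrictCfg (Finset.mem_powerset.mp B.2) ω)|
            + |Φ B.1 (restrictCfg (Finset.mem_powerset.mp B.2) ω')| := abs_sub _ _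
        _ ≤ potNorm Φ B.1 + potNorm Φ B.1 := by
            exact add_le_add (abs_le_potNorm Φ _ _) (abs_le_potNorm Φ _ _)
        _ = 2 * potNorm Φ B.1 := by ring
    · rw [if_neg hne]
      have : restrictCfg (Finset.mem_powerset.mp B.2) ω
          = restrictCfg (Finset.mem_powerset.mp B.2) ω' := by
        refine restrictCfg_eq_of_agree _ _ _ hagree ?_
        intro p hp hpA
        exact hne ⟨p, Finset.mem_inter.mpr ⟨hp, hpA⟩⟩
      rw [this, sub_self, abs_zero]
  refine le_trans (Finset.sum_le_sum (fun B _ => hterm B)) ?_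
  rw [Finset.sum_attach Λ.powerset (fun B => if (B ∩ A).Nonempty then 2 * potNorm Φ B else 0)]
  rw [Finset.sum_ite, Finset.sum_const_zero, add_zero]
  -- now: ∑ B in (Λ.powerset.filter fun B => (B ∩ A).Nonempty), 2 * potNorm Φ B ≤ ...
  have hstep : ∀ B ∈ Λ.powerset.filter (fun B => (B ∩ A).Nonempty),
      2 * potNorm Φ B ≤ ∑ p ∈ A, (if p ∈ B then 2 * potNorm Φ B else 0) := by
    intro B hB
    obtain ⟨p0, hp0⟩ := (Finset.mem_filter.mp hB).2
    have hp0B : p0 ∈ B := (Finset.mem_inter.mp hp0).1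
    have hp0A : p0 ∈ A := (Finset.mem_inter.mp hp0).2
    have := Finset.single_le_sum (f := fun p => if p ∈ B then 2 * potNorm Φ B else 0)
      (fun p _ => by by_cases h : p ∈ B <;> simp [h, potNorm_nonneg Φ B]) hp0A
    simpa [hp0B] using this
  refine le_trans (Finset.sum_le_sum hstep) ?_
  rw [Finset.sum_comm]
  have hinner : ∀ p ∈ A,
      ∑ B ∈ Λ.powerset.filter (fun B => (B ∩ A).Nonempty), (if p ∈ B then 2 * potNorm Φ B else 0)
      ≤ 2 * potFullNorm Φ := by
    intro p _
    rw [Finset.sum_ite, Finset.sum_const_zero, add_zero]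
    have := sum_potNorm_le hTI hAS p
      ((Λ.powerset.filter (fun B => (B ∩ A).Nonempty)).filter (fun B => p ∈ B))
      (fun B hB => (Finset.mem_filter.mp hB).2)
    calc ∑ B ∈ (Λ.powerset.filter (fun B => (B ∩ A).Nonempty)).filter (fun B => p ∈ B),
          2 * potNorm Φ B
        = 2 * ∑ B ∈ (Λ.powerset.filter (fun B => (B ∩ A).Nonempty)).filter (fun B => p ∈ B),
            potNorm Φ B := by rw [Finset.mul_sum]
      _ ≤ 2 * potFullNorm Φ := by linarith
  calc ∑ p ∈ A, ∑ B ∈ Λ.powerset.filter (fun B => (B ∩ A).Nonempty),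
        (if p ∈ B then 2 * potNorm Φ B else 0)
      ≤ ∑ p ∈ A, 2 * potFullNorm Φ := Finset.sum_le_sum hinner
    _ = 2 * A.card * potFullNorm Φ := by rw [Finset.sum_const, nsmul_eq_mul]; ring

/-- Replace the part of a configuration on `A` by `τ`. -/
def replaceCfg {Λ A : Finset (Zd d)} (hA : A ⊆ Λ) (τ : Config S A) (ω : Config S Λ) :
    Config S Λ := fun i => if h : i.1 ∈ A then τ ⟨i.1, h⟩ else ω i

lemma restrict_replaceCfg {Λ A : Finset (Zd d)} (hA : A ⊆ Λ) (τ : Config S A)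
    (ω : Config S Λ) : restrictCfg hA (replaceCfg hA τ ω) = τ := by
  funext a; simp [restrictCfg, replaceCfg, a.2]

lemma replaceCfg_agree {Λ A : Finset (Zd d)} (hA : A ⊆ Λ) (τ : Config S A)
    (ω : Config S Λ) : ∀ i : {x // x ∈ Λ}, i.1 ∉ A → replaceCfg hA τ ω i = ω i := by
  intro i hi; simp [replaceCfg, hi]

lemma replaceCfg_replaceCfg {Λ A : Finset (Zd d)} (hA : A ⊆ Λ) (τ τ' : Config S A)
    (ω : Config S Λ) (h : restrictCfg hA ω = τ') :
    replaceCfg hA τ' (replaceCfg hA τ ω) = ω := by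
  subst h
  funext i
  by_cases hi : i.1 ∈ A
  · simp [replaceCfg, hi, restrictCfg]
  · simp [replaceCfg, hi]

end Aux2
section Aux3
open Filter Topology Finset

attribute [local instance 10] Classical.propDecidable

variable {d : ℕ} {S : Type} [Fintype S] [Nonempty S]

set_option maxHeartbeats 1600000 in
lemma fiber_lb {Φ : Pot d S} (hTI : TransInv Φ) (hAS : AbsSummable Φ)
    {Λ A : Finset (Zd d)} (hA : A ⊆ Λ) {β : ℝ} (hβ : 0 ≤ β) (τ : Config S A) :
    Zfun Φ Λ β ≤ (Fintype.card (Config S A) : ℝ)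
      * Real.exp (β * (2 * A.card * potFullNorm Φ))
      * ∑ ω ∈ Finset.univ.filter (fun ω => restrictCfg hA ω = τ), Real.exp (-β * Ham Φ Λ ω) := by
  set K := 2 * A.card * potFullNorm Φ with hK
  set Fib : Config S A → ℝ :=
    fun τ' => ∑ ω ∈ Finset.univ.filter (fun ω => restrictCfg hA ω = τ'), Real.exp (-β * Ham Φ Λ ω)
    with hFib
  have hfib : ∀ τ' : Config S A, Fib τ' ≤ Real.exp (β * K) * Fib τ := by
    intro τ'
    have hmap : ∀ ω ∈ Finset.univ.filter (fun ω => restrictCfg hA ω = τ'),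
        Real.exp (-β * Ham Φ Λ ω) ≤ Real.exp (β * K)
          * Real.exp (-β * Ham Φ Λ (replaceCfg hA τ ω)) := by
      intro ω hω
      rw [← Real.exp_add, Real.exp_le_exp]
      have hdiff := Ham_diff_le hTI hAS hA (replaceCfg hA τ ω) ω
        (fun i hi => replaceCfg_agree hA τ ω i hi)
      rw [← hK] at hdiff
      have h1 := (abs_le.mp hdiff).2
      nlinarith [mul_le_mul_of_nonneg_left h1 hβ]
    calc Fib τ' ≤ ∑ ω ∈ Finset.univ.filter (fun ω => restrictCfg hA ω = τ'),
          Real.exp (β * K) * Real.exp (-β * Ham Φ Λ (replaceCfg hA τ ω)) :=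
        Finset.sum_le_sum hmap
      _ = Real.exp (β * K) * ∑ ω ∈ Finset.univ.filter (fun ω => restrictCfg hA ω = τ'),
          Real.exp (-β * Ham Φ Λ (replaceCfg hA τ ω)) := by rw [Finset.mul_sum]
      _ = Real.exp (β * K) * Fib τ := by
          congr 1
          refine Finset.sum_nbij' (i := fun ω => replaceCfg hA τ ω)
            (j := fun ω => replaceCfg hA τ' ω) ?_ ?_ ?_ ?_ ?_
          · intro ω hω
            simp only [Finset.mem_filter, Finset.mem_univ, true_and]
            exact restrict_replaceCfg hA τ ω
          · intro ω hω
            simp only [Finset.mem_filter, Finset.mem_univ, true_and]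
            exact restrict_replaceCfg hA τ' ω
          · intro ω hω
            exact replaceCfg_replaceCfg hA τ τ' ω (Finset.mem_filter.mp hω).2
          · intro ω hω
            exact replaceCfg_replaceCfg hA τ' τ ω (Finset.mem_filter.mp hω).2
          · intro ω hω; rfl
  have hZ : Zfun Φ Λ β = ∑ τ' : Config S A, Fib τ' := by
    unfold Zfun
    rw [hFib]
    exact (Finset.sum_fiberwise_of_maps_to (fun ω _ => Finset.mem_univ (restrictCfg hA ω))
      (fun ω => Real.exp (-β * Ham Φ Λ ω))).symm
  rw [hZ]
  calc ∑ τ' : Config S A, Fib τ' ≤ ∑ _τ' : Config S A, Real.exp (β * K) * Fib τ :=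
      Finset.sum_le_sum fun τ' _ => hfib τ'
    _ = (Fintype.card (Config S A) : ℝ) * Real.exp (β * K) * Fib τ := by
        rw [Finset.sum_const, nsmul_eq_mul, Finset.card_univ]; ring

lemma gibbsVar_eq_moment {Φ : Pot d S} {Λ : Finset (Zd d)} {β : ℝ} (f : Config S Λ → ℝ) :
    gibbsVar Φ Λ β f = (∑ ω : Config S Λ,
      (f ω - gibbsExp Φ Λ β f)^2 * Real.exp (-β * Ham Φ Λ ω)) / Zfun Φ Λ β := by
  have hZpos : 0 < Zfun Φ Λ β := Zfun_pos Φ Λ β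
  have hZne : Zfun Φ Λ β ≠ 0 := ne_of_gt hZpos
  have hZsum : (∑ ω : Config S Λ, Real.exp (-β * Ham Φ Λ ω)) = Zfun Φ Λ β := rfl
  set m := gibbsExp Φ Λ β f with hm
  have hE1 : (∑ ω : Config S Λ, f ω * Real.exp (-β * Ham Φ Λ ω)) = m * Zfun Φ Λ β := by
    rw [hm]
    unfold gibbsExp
    exact (div_mul_cancel₀ _ hZne).symm
  have hnum : (∑ ω : Config S Λ, (f ω - m)^2 * Real.exp (-β * Ham Φ Λ ω))
      = (∑ ω : Config S Λ, (f ω)^2 * Real.exp (-β * Ham Φ Λ ω))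
        - 2 * m * (m * Zfun Φ Λ β) + m^2 * Zfun Φ Λ β := by
    have hterm : ∀ ω : Config S Λ, (f ω - m)^2 * Real.exp (-β * Ham Φ Λ ω)
        = (f ω)^2 * Real.exp (-β * Ham Φ Λ ω)
          - 2 * m * (f ω * Real.exp (-β * Ham Φ Λ ω))
          + m^2 * Real.exp (-β * Ham Φ Λ ω) := fun ω => by ring
    rw [Finset.sum_congr rfl fun ω _ => hterm ω, Finset.sum_add_distrib,
      Finset.sum_sub_distrib, ← Finset.mul_sum, ← Finset.mul_sum, hE1, hZsum]
  rw [hnum]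
  unfold gibbsVar
  have hsq : gibbsExp Φ Λ β (fun ω => f ω ^ 2)
      = (∑ ω : Config S Λ, (f ω)^2 * Real.exp (-β * Ham Φ Λ ω)) / Zfun Φ Λ β := rfl
  rw [hsq, ← hm]
  field_simp
  ring

lemma gibbsVar_lb {Φ : Pot d S} (hTI : TransInv Φ) (hAS : AbsSummable Φ)
    {Λ A : Finset (Zd d)} (hA : A ⊆ Λ) {β : ℝ} (hβ : 0 ≤ β) (F : Config S A → ℝ)
    (τ₁ τ₂ : Config S A) :
    (F τ₁ - F τ₂)^2 / 4 / ((Fintype.card (Config S A) : ℝ)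
      * Real.exp (β * (2 * A.card * potFullNorm Φ)))
    ≤ gibbsVar Φ Λ β (fun ω => F (restrictCfg hA ω)) := by
  set K := 2 * A.card * potFullNorm Φ with hK
  set C := (Fintype.card (Config S A) : ℝ) * Real.exp (β * K) with hC
  have hCpos : 0 < C := by
    rw [hC]
    have : 0 < Fintype.card (Config S A) := Fintype.card_pos
    positivity
  have hZpos : 0 < Zfun Φ Λ β := Zfun_pos Φ Λ β
  set Z := Zfun Φ Λ β with hZdef
  set m := gibbsExp Φ Λ β (fun ω => F (restrictCfg hA ω)) with hm
  have hvar := gibbsVar_eq_moment (Φ := Φ) (Λ := Λ) (β := β) (fun ω => F (restrictCfg hA ω))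
  rw [← hm, ← hZdef] at hvar
  have hfiber : ∀ τ : Config S A,
      Z / C ≤ ∑ ω ∈ Finset.univ.filter (fun ω => restrictCfg hA ω = τ),
        Real.exp (-β * Ham Φ Λ ω) := by
    intro τ
    have h := fiber_lb hTI hAS hA hβ τ
    rw [← hK, ← hC, ← hZdef] at h
    rw [div_le_iff₀ hCpos, mul_comm]
    exact h
  obtain ⟨τ, hτ⟩ : ∃ τ : Config S A, (F τ₁ - F τ₂)^2/4 ≤ (F τ - m)^2 := by
    rcases le_total ((F τ₁ - m)^2) ((F τ₂ - m)^2) with h | h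
    · exact ⟨τ₂, by nlinarith [h, sq_nonneg (F τ₁ - m + (F τ₂ - m))]⟩
    · exact ⟨τ₁, by nlinarith [h, sq_nonneg (F τ₁ - m + (F τ₂ - m))]⟩
  rw [hvar]
  have hFibnn : (0:ℝ) ≤ ∑ ω ∈ Finset.univ.filter (fun ω => restrictCfg hA ω = τ),
      Real.exp (-β * Ham Φ Λ ω) := Finset.sum_nonneg fun ω _ => (Real.exp_pos _).le
  have hfsum : (F τ - m)^2 * (∑ ω ∈ Finset.univ.filter (fun ω => restrictCfg hA ω = τ),
        Real.exp (-β * Ham Φ Λ ω))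
      ≤ ∑ ω : Config S Λ, (F (restrictCfg hA ω) - m)^2 * Real.exp (-β * Ham Φ Λ ω) := by
    rw [Finset.mul_sum]
    calc (∑ ω ∈ Finset.univ.filter (fun ω => restrictCfg hA ω = τ),
          (F τ - m)^2 * Real.exp (-β * Ham Φ Λ ω))
        = ∑ ω ∈ Finset.univ.filter (fun ω => restrictCfg hA ω = τ),
            (F (restrictCfg hA ω) - m)^2 * Real.exp (-β * Ham Φ Λ ω) := by
          refine Finset.sum_congr rfl fun ω hω => ?_
          rw [(Finset.mem_filter.mp hω).2]
      _ ≤ _ := Finset.sum_le_sum_of_subset_of_nonneg (Finset.subset_univ _)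
            (fun ω _ _ => by positivity)
  have hkey : (F τ₁ - F τ₂)^2/4 * (Z / C)
      ≤ ∑ ω : Config S Λ, (F (restrictCfg hA ω) - m)^2 * Real.exp (-β * Ham Φ Λ ω) := by
    calc (F τ₁ - F τ₂)^2/4 * (Z / C)
        ≤ (F τ - m)^2 * (Z / C) := by
          apply mul_le_mul_of_nonneg_right hτ
          positivity
      _ ≤ (F τ - m)^2 * (∑ ω ∈ Finset.univ.filter (fun ω => restrictCfg hA ω = τ),
            Real.exp (-β * Ham Φ Λ ω)) := by
          apply mul_le_mul_of_nonneg_left (hfiber τ) (by positivity)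
      _ ≤ _ := hfsum
  have heq : (F τ₁ - F τ₂)^2/4 / C = (F τ₁ - F τ₂)^2/4 * (Z / C) / Z := by
    field_simp
  rw [heq]
  gcongr

end Aux3
section Aux4
open Filter Topology Finset

attribute [local instance 10] Classical.propDecidable

variable {d : ℕ} {S : Type} [Fintype S] [Nonempty S]

lemma gibbsExp_sum {Φ : Pot d S} {Λ : Finset (Zd d)} {β : ℝ} {ι : Type} (s : Finset ι)
    (f : ι → Config S Λ → ℝ) :
    gibbsExp Φ Λ β (fun ω => ∑ i ∈ s, f i ω) = ∑ i ∈ s, gibbsExp Φ Λ β (f i) := by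
  unfold gibbsExp
  rw [← Finset.sum_div]
  congr 1
  rw [Finset.sum_comm]
  exact Finset.sum_congr rfl fun ω _ => Finset.sum_mul _ _ _

lemma gibbsCov_sum_sum {Φ : Pot d S} {Λ : Finset (Zd d)} {β : ℝ} {ι κ : Type}
    (s : Finset ι) (t : Finset κ) (f : ι → Config S Λ → ℝ) (g : κ → Config S Λ → ℝ) :
    gibbsCov Φ Λ β (fun ω => ∑ i ∈ s, f i ω) (fun ω => ∑ j ∈ t, g j ω)
      = ∑ i ∈ s, ∑ j ∈ t, gibbsCov Φ Λ β (f i) (g j) := by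
  unfold gibbsCov
  have h1 : gibbsExp Φ Λ β (fun ω => (∑ i ∈ s, f i ω) * ∑ j ∈ t, g j ω)
      = ∑ i ∈ s, ∑ j ∈ t, gibbsExp Φ Λ β (fun ω => f i ω * g j ω) := by
    have : (fun ω => (∑ i ∈ s, f i ω) * ∑ j ∈ t, g j ω)
        = fun ω => ∑ i ∈ s, ∑ j ∈ t, f i ω * g j ω := by
      funext ω; rw [Finset.sum_mul_sum]
    rw [this, gibbsExp_sum]
    exact Finset.sum_congr rfl fun i _ => gibbsExp_sum t _
  rw [h1, gibbsExp_sum, gibbsExp_sum, Finset.sum_mul_sum]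
  rw [← Finset.sum_sub_distrib]
  exact Finset.sum_congr rfl fun i _ => by rw [← Finset.sum_sub_distrib]

lemma gibbsVar_eq_gibbsCov {Φ : Pot d S} {Λ : Finset (Zd d)} {β : ℝ}
    (f : Config S Λ → ℝ) : gibbsVar Φ Λ β f = gibbsCov Φ Λ β f f := by
  unfold gibbsVar gibbsCov
  congr 1
  · congr 1; funext ω; ring
  · ring

/-- Interaction term as a total function. -/
noncomputable def termF (Φ : Pot d S) (Λ B : Finset (Zd d)) : Config S Λ → ℝ :=
  fun ω => if h : B ⊆ Λ then Φ B (restrictCfg h ω) else 0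

lemma Ham_eq_sum_termF (Φ : Pot d S) (Λ : Finset (Zd d)) (ω : Config S Λ) :
    Ham Φ Λ ω = ∑ B ∈ Λ.powerset, termF Φ Λ B ω := by
  unfold Ham
  rw [← Finset.sum_attach Λ.powerset (fun B => termF Φ Λ B ω)]
  refine Finset.sum_congr rfl fun B _ => ?_
  unfold termF
  rw [dif_pos (Finset.mem_powerset.mp B.2)]

lemma varHam_lb {Φ : Pot d S} (hPC : PosCorr Φ) {Λ : Finset (Zd d)} {β : ℝ} (hβ : 0 < β)
    (TT : Finset (Finset (Zd d))) (hTT : ∀ B ∈ TT, B ⊆ Λ) (δ : ℝ)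
    (hδ : ∀ B ∈ TT, δ ≤ gibbsVar Φ Λ β (termF Φ Λ B)) :
    (TT.card : ℝ) * δ ≤ gibbsVar Φ Λ β (Ham Φ Λ) := by
  have hcov_nn : ∀ B ∈ Λ.powerset, ∀ C ∈ Λ.powerset,
      0 ≤ gibbsCov Φ Λ β (termF Φ Λ B) (termF Φ Λ C) := by
    intro B hB C hC
    have hBs := Finset.mem_powerset.mp hB
    have hCs := Finset.mem_powerset.mp hC
    have h1 : termF Φ Λ B = fun ω => Φ B (restrictCfg hBs ω) := by
      funext ω; unfold termF; rw [dif_pos hBs]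
    have h2 : termF Φ Λ C = fun ω => Φ C (restrictCfg hCs ω) := by
      funext ω; unfold termF; rw [dif_pos hCs]
    rw [h1, h2]
    exact hPC Λ B C hBs hCs β hβ
  have hHam : gibbsVar Φ Λ β (Ham Φ Λ)
      = ∑ B ∈ Λ.powerset, ∑ C ∈ Λ.powerset,
          gibbsCov Φ Λ β (termF Φ Λ B) (termF Φ Λ C) := by
    rw [gibbsVar_eq_gibbsCov]
    have : Ham Φ Λ = fun ω => ∑ B ∈ Λ.powerset, termF Φ Λ B ω := by
      funext ω; exact Ham_eq_sum_termF Φ Λ ω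
    rw [this, gibbsCov_sum_sum]
  rw [hHam]
  have hTTsub : TT ⊆ Λ.powerset := fun B hB => Finset.mem_powerset.mpr (hTT B hB)
  have hstep : ∀ B ∈ Λ.powerset,
      (if B ∈ TT then gibbsCov Φ Λ β (termF Φ Λ B) (termF Φ Λ B) else 0)
      ≤ ∑ C ∈ Λ.powerset, gibbsCov Φ Λ β (termF Φ Λ B) (termF Φ Λ C) := by
    intro B hB
    by_cases hBTT : B ∈ TT
    · rw [if_pos hBTT]
      exact Finset.single_le_sum (fun C hC => hcov_nn B hB C hC) hB
    · rw [if_neg hBTT]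
      exact Finset.sum_nonneg fun C hC => hcov_nn B hB C hC
  refine le_trans ?_ (Finset.sum_le_sum hstep)
  rw [Finset.sum_ite, Finset.sum_const_zero, add_zero]
  have hfilter : Λ.powerset.filter (fun B => B ∈ TT) = TT := by
    rw [Finset.filter_mem_eq_inter]
    exact Finset.inter_eq_right.mpr hTTsub
  rw [hfilter]
  calc (TT.card : ℝ) * δ = ∑ _B ∈ TT, δ := by rw [Finset.sum_const, nsmul_eq_mul]
    _ ≤ ∑ B ∈ TT, gibbsCov Φ Λ β (termF Φ Λ B) (termF Φ Λ B) := by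
        refine Finset.sum_le_sum fun B hB => ?_
        rw [← gibbsVar_eq_gibbsCov]
        exact hδ B hB

/-- minus the mean energy, numerator of `d/dβ Z`. -/
noncomputable def Efun (Φ : Pot d S) (Λ : Finset (Zd d)) (β : ℝ) : ℝ :=
  ∑ ω : Config S Λ, Real.exp (-β * Ham Φ Λ ω) * (-(Ham Φ Λ ω))

noncomputable def P1 (Φ : Pot d S) (Λ : Finset (Zd d)) (β : ℝ) : ℝ :=
  -(Efun Φ Λ β / Zfun Φ Λ β) / Λ.card

lemma hasDerivAt_exp_term {H : ℝ} (β : ℝ) :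
    HasDerivAt (fun t : ℝ => Real.exp (-t * H)) (Real.exp (-β * H) * (-H)) β := by
  have h1 : HasDerivAt (fun t : ℝ => -t * H) (-H) β := by
    simpa using ((hasDerivAt_id β).neg.mul_const H)
  exact h1.exp

lemma hasDerivAt_Zfun (Φ : Pot d S) (Λ : Finset (Zd d)) (β : ℝ) :
    HasDerivAt (fun t => Zfun Φ Λ t) (Efun Φ Λ β) β := by
  unfold Zfun Efun
  exact HasDerivAt.fun_sum fun ω _ => hasDerivAt_exp_term β

lemma hasDerivAt_Efun (Φ : Pot d S) (Λ : Finset (Zd d)) (β : ℝ) :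
    HasDerivAt (fun t => Efun Φ Λ t)
      (∑ ω : Config S Λ, Real.exp (-β * Ham Φ Λ ω) * (Ham Φ Λ ω)^2) β := by
  have h : HasDerivAt (fun t => ∑ ω : Config S Λ, Real.exp (-t * Ham Φ Λ ω) * (-(Ham Φ Λ ω)))
      (∑ ω : Config S Λ, (Real.exp (-β * Ham Φ Λ ω) * (-(Ham Φ Λ ω))) * (-(Ham Φ Λ ω))) β :=
    HasDerivAt.fun_sum fun ω _ => (hasDerivAt_exp_term β).mul_const _
  have heq : (fun t => Efun Φ Λ t)
      = fun t => ∑ ω : Config S Λ, Real.exp (-t * Ham Φ Λ ω) * (-(Ham Φ Λ ω)) := by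
    funext t; rfl
  rw [heq]
  convert h using 1
  exact Finset.sum_congr rfl fun ω _ => by ring

lemma hasDerivAt_pressureFin (Φ : Pot d S) (Λ : Finset (Zd d)) (β : ℝ) :
    HasDerivAt (fun t => pressureFin Φ Λ t) (P1 Φ Λ β) β := by
  have hZpos := Zfun_pos Φ Λ β
  have h := (((hasDerivAt_Zfun Φ Λ β).log (ne_of_gt hZpos)).neg).div_const (Λ.card : ℝ)
  exact h

lemma sum_Ham_exp_eq (Φ : Pot d S) (Λ : Finset (Zd d)) (β : ℝ) :
    (∑ ω : Config S Λ, Ham Φ Λ ω * Real.exp (-β * Ham Φ Λ ω)) = -(Efun Φ Λ β) := by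
  unfold Efun
  rw [← Finset.sum_neg_distrib]
  exact Finset.sum_congr rfl fun ω _ => by ring

lemma gibbsVar_Ham_eq (Φ : Pot d S) (Λ : Finset (Zd d)) (β : ℝ) :
    gibbsVar Φ Λ β (Ham Φ Λ)
      = (∑ ω : Config S Λ, Real.exp (-β * Ham Φ Λ ω) * (Ham Φ Λ ω)^2) / Zfun Φ Λ β
        - (Efun Φ Λ β / Zfun Φ Λ β)^2 := by
  have hmean : gibbsExp Φ Λ β (Ham Φ Λ) = -(Efun Φ Λ β / Zfun Φ Λ β) := by
    unfold gibbsExp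
    rw [sum_Ham_exp_eq, neg_div]
  have hsq : gibbsExp Φ Λ β (fun ω => Ham Φ Λ ω ^ 2)
      = (∑ ω : Config S Λ, Real.exp (-β * Ham Φ Λ ω) * (Ham Φ Λ ω)^2) / Zfun Φ Λ β := by
    unfold gibbsExp
    congr 1
    exact Finset.sum_congr rfl fun ω _ => by ring
  unfold gibbsVar
  rw [hmean, hsq]
  ring

lemma hasDerivAt_P1 (Φ : Pot d S) (Λ : Finset (Zd d)) (β : ℝ) :
    HasDerivAt (fun t => P1 Φ Λ t) (-(gibbsVar Φ Λ β (Ham Φ Λ)) / Λ.card) β := by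
  have hZpos := Zfun_pos Φ Λ β
  have hZne : Zfun Φ Λ β ≠ 0 := ne_of_gt hZpos
  have h := (((hasDerivAt_Efun Φ Λ β).div (hasDerivAt_Zfun Φ Λ β) hZne).neg).div_const
    (Λ.card : ℝ)
  refine h.congr_deriv ?_
  rw [gibbsVar_Ham_eq]
  field_simp

end Aux4
section Aux5
open Filter Topology Finset

variable {d : ℕ}

lemma mem_cube {z : Zd d} {n : ℕ} : z ∈ cube d n ↔ ∀ i, -(n:ℤ) ≤ z i ∧ z i ≤ n := by
  unfold cube
  rw [Fintype.mem_piFinset]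
  simp [Finset.mem_Icc]

lemma cube_card (n : ℕ) : (cube d n).card = (2*n+1)^d := by
  unfold cube
  rw [Fintype.card_piFinset]
  have h : (Finset.Icc (-(n:ℤ)) n).card = 2*n+1 := by
    rw [Int.card_Icc]; omega
  simp [h]

lemma cube_card_pos (n : ℕ) : 0 < (cube d n).card := by
  rw [cube_card]; positivity

lemma cube_mono {k n : ℕ} (h : k ≤ n) : cube d k ⊆ cube d n := by
  intro z hz
  rw [mem_cube] at *
  intro i
  have := hz i
  constructor <;> [omega; omega]

lemma exists_cube_sub (A₀ : Finset (Zd d)) : ∃ m : ℕ, A₀ ⊆ cube d m := by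
  set M := A₀.sup fun a => Finset.univ.sup fun i => (a i).natAbs with hM
  refine ⟨M, ?_⟩
  intro a ha
  rw [mem_cube]
  intro i
  have h1 : (a i).natAbs ≤ M :=
    le_trans (Finset.le_sup (f := fun i => (a i).natAbs) (Finset.mem_univ i))
      (Finset.le_sup (f := fun a => Finset.univ.sup fun i => (a i).natAbs) ha)
  clear_value M
  have h2 : |a i| ≤ (M:ℤ) := by rw [Int.abs_eq_natAbs]; exact_mod_cast h1
  exact abs_le.mp h2

lemma shift_sub_cube {A₀ : Finset (Zd d)} {m k : ℕ} (hA : A₀ ⊆ cube d m) {x : Zd d}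
    (hx : x ∈ cube d k) : shiftSet x A₀ ⊆ cube d (m + k) := by
  intro z hz
  obtain ⟨a, ha, rfl⟩ := Finset.mem_image.mp hz
  have h1 := mem_cube.mp (hA ha)
  have h2 := mem_cube.mp hx
  rw [mem_cube]
  intro i
  have ha1 := h1 i
  have hx1 := h2 i
  have : (a + x) i = a i + x i := rfl
  rw [this]
  push_cast
  omega

lemma shiftSet_inj {A₀ : Finset (Zd d)} (hA : A₀.Nonempty) :
    Function.Injective (fun x : Zd d => shiftSet x A₀) := by
  intro x y h
  have hsum : ∀ w : Zd d, ∑ z ∈ shiftSet w A₀, z = (∑ a ∈ A₀, a) + A₀.card • w := by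
    intro w
    unfold shiftSet
    rw [Finset.sum_image (fun u _ v _ huv => by exact add_right_cancel huv)]
    rw [Finset.sum_add_distrib, Finset.sum_const]
  have h2 := hsum x
  simp only at h
  rw [h, hsum y] at h2
  have h3 : A₀.card • x = A₀.card • y := (add_left_cancel h2).symm
  funext i
  have h4 := congrFun h3 i
  have h5 : (A₀.card : ℤ) * x i = (A₀.card : ℤ) * y i := by
    have hx1 : (A₀.card • x) i = (A₀.card : ℤ) * x i := by
      simp [Pi.smul_apply, nsmul_eq_mul]
    have hy1 : (A₀.card • y) i = (A₀.card : ℤ) * y i := by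
      simp [Pi.smul_apply, nsmul_eq_mul]
    rw [← hx1, ← hy1, h4]
  have hcard : (A₀.card : ℤ) ≠ 0 := by
    exact_mod_cast Finset.card_ne_zero.mpr hA
  exact mul_left_cancel₀ hcard h5

lemma cube_card_ratio {m n : ℕ} (h : 2*m ≤ n) :
    ((cube d n).card : ℝ) ≤ 3^d * ((cube d (n - m)).card : ℝ) := by
  rw [cube_card, cube_card]
  have h1 : (2*n+1) ≤ 3*(2*(n-m)+1) := by omega
  have h2 := Nat.pow_le_pow_left h1 d
  rw [mul_pow] at h2
  exact_mod_cast h2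

end Aux5
section Key
open Filter Topology Finset

attribute [local instance 10] Classical.propDecidable

variable {d : ℕ} {S : Type} [Fintype S] [Nonempty S]

lemma hasDerivAt_halfsq (c t : ℝ) : HasDerivAt (fun s : ℝ => c/2*s^2) (c*t) t := by
  have h := (hasDerivAt_pow 2 t).const_mul (c/2)
  refine h.congr_deriv ?_
  ring

lemma Phi_shiftEquiv {Φ : Pot d S} (hTI : TransInv Φ) (x : Zd d) (A : Finset (Zd d))
    (σ : Config S A) : Φ (shiftSet x A) ((shiftEquiv x A) σ) = Φ A σ := by
  rw [hTI x A]
  exact congrArg (Φ A) ((shiftEquiv x A).left_inv σ)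

lemma key_slope {Φ : Pot d S} (hTI : TransInv Φ) (hAS : AbsSummable Φ) (hPC : PosCorr Φ)
    (hnc : ∃ (A₀ : Finset (Zd d)) (ω₁ ω₂ : Config S A₀), Φ A₀ ω₁ ≠ Φ A₀ ω₂)
    (ψ : ℝ → ℝ) (hψ : ∀ β : ℝ, Filter.Tendsto (pressureSeq Φ β) Filter.atTop (𝓝 (ψ β)))
    (hdiff : ∀ β : ℝ, 0 < β → DifferentiableAt ℝ ψ β)
    {x y : ℝ} (hx : 0 < x) (hxy : x < y) :
    ∃ c > 0, ∀ β₁ β₂, β₁ ∈ Set.Icc x y → β₂ ∈ Set.Icc x y → β₁ < β₂ →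
      deriv ψ β₂ + c * (β₂ - β₁) ≤ deriv ψ β₁ := by
  obtain ⟨A₀, ω₁, ω₂, hω⟩ := hnc
  have hA₀ne : A₀.Nonempty := by
    rcases Finset.eq_empty_or_nonempty A₀ with h | h
    · exfalso
      apply hω
      subst h
      have : ω₁ = ω₂ := by
        funext i
        exact absurd i.2 (Finset.notMem_empty i.1)
      rw [this]
    · exact h
  obtain ⟨m, hm⟩ := exists_cube_sub A₀
  set Δ := Φ A₀ ω₁ - Φ A₀ ω₂ with hΔ
  have hΔne : Δ ≠ 0 := sub_ne_zero.mpr hω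
  set NA := ((Fintype.card S : ℝ)) ^ (A₀.card) with hNA
  have hNApos : 0 < NA := by
    rw [hNA]
    have : 0 < Fintype.card S := Fintype.card_pos
    positivity
  set K := 2 * (A₀.card : ℝ) * potFullNorm Φ with hK
  have hKnn : 0 ≤ K := by
    rw [hK]
    have := potFullNorm_nonneg Φ
    positivity
  set δ : ℝ := Δ^2 / 4 / (NA * Real.exp (y * K)) with hδ
  have hδpos : 0 < δ := by
    rw [hδ]
    positivity
  set c := δ / 3^d with hc
  have hcpos : 0 < c := by rw [hc]; positivity
  -- the uniform second-derivative bound, for n ≥ 2m and β' ∈ [x,y]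
  have hvarbound : ∀ n : ℕ, 2*m ≤ n → ∀ β' : ℝ, x ≤ β' → β' ≤ y →
      c ≤ gibbsVar Φ (cube d n) β' (Ham Φ (cube d n)) / ((cube d n).card : ℝ) := by
    intro n hn β' hβ'x hβ'y
    have hβ'pos : 0 < β' := lt_of_lt_of_le hx hβ'x
    set Λ := cube d n with hΛ
    set T := cube d (n - m) with hT
    set TT := T.image (fun x => shiftSet x A₀) with hTT
    have hTTsub : ∀ B ∈ TT, B ⊆ Λ := by
      intro B hB
      obtain ⟨z, hz, rfl⟩ := Finset.mem_image.mp hB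
      have h1 := shift_sub_cube hm hz
      have h2 : m + (n - m) = n := by omega
      rw [h2] at h1
      exact h1
    -- each translated term has variance at least δ
    have hδB : ∀ B ∈ TT, δ ≤ gibbsVar Φ Λ β' (termF Φ Λ B) := by
      intro B hB
      obtain ⟨z, hz, rfl⟩ := Finset.mem_image.mp hB
      set B := shiftSet z A₀ with hBdef
      have hBsub : B ⊆ Λ := hTTsub B (Finset.mem_image_of_mem _ hz)
      have hterm : termF Φ Λ B = fun ω => Φ B (restrictCfg hBsub ω) := by
        funext ω; unfold termF; rw [dif_pos hBsub]
      rw [hterm]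
      have hlb := gibbsVar_lb hTI hAS hBsub (le_of_lt hβ'pos) (Φ B)
        ((shiftEquiv z A₀) ω₁) ((shiftEquiv z A₀) ω₂)
      have hv1 : Φ B ((shiftEquiv z A₀) ω₁) = Φ A₀ ω₁ := Phi_shiftEquiv hTI z A₀ ω₁
      have hv2 : Φ B ((shiftEquiv z A₀) ω₂) = Φ A₀ ω₂ := Phi_shiftEquiv hTI z A₀ ω₂
      rw [hv1, hv2] at hlb
      have hcard : B.card = A₀.card := Finset.card_image_of_injective A₀ (add_left_injective z)
      have hcardC : (Fintype.card (Config S B) : ℝ) = NA := by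
        rw [hNA]
        have h1 : Fintype.card (Config S B) = Fintype.card S ^ B.card := by
          rw [Fintype.card_fun, Fintype.card_coe]
        rw [h1, hcard]
        push_cast
        rfl
      rw [hcardC, hcard, ← hK] at hlb
      refine le_trans ?_ hlb
      rw [hδ]
      have hexp : Real.exp (β' * K) ≤ Real.exp (y * K) :=
        Real.exp_le_exp.mpr (mul_le_mul_of_nonneg_right hβ'y hKnn)
      gcongr
    -- combine over all translates
    have hvar := varHam_lb hPC hβ'pos TT hTTsub δ hδB
    have hTTcard : TT.card = T.card :=
      Finset.card_image_of_injective T (shiftSet_inj hA₀ne)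
    have hcardpos : (0:ℝ) < ((cube d n).card : ℝ) := by
      exact_mod_cast cube_card_pos n
    have hratio : ((cube d n).card : ℝ) ≤ 3^d * ((cube d (n-m)).card : ℝ) :=
      cube_card_ratio hn
    have hstep : c ≤ ((TT.card : ℝ) * δ) / ((cube d n).card : ℝ) := by
      rw [hc, div_le_div_iff₀ (by positivity) hcardpos]
      rw [hTTcard]
      have hTcard : (T.card : ℝ) = ((cube d (n-m)).card : ℝ) := by rw [hT]
      rw [hTcard]
      nlinarith [hratio, hδpos.le, hδpos]
    refine le_trans hstep ?_
    gcongr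
  -- concavity of the auxiliary functions at finite volume
  have hconcn : ∀ n : ℕ, 2*m ≤ n →
      ConvexOn ℝ (Set.Icc x y) (fun t => -(pressureFin Φ (cube d n) t) - c/2*t^2) := by
    intro n hn
    refine convexOn_of_hasDerivWithinAt2_nonneg (f' := fun t => -(P1 Φ (cube d n) t) - c*t)
      (f'' := fun t => gibbsVar Φ (cube d n) t (Ham Φ (cube d n)) / ((cube d n).card:ℝ) - c)
      (convex_Icc x y) ?_ ?_ ?_ ?_
    · intro t _
      exact (((hasDerivAt_pressureFin Φ (cube d n) t).neg.sub
        (hasDerivAt_halfsq c t)).continuousAt).continuousWithinAt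
    · intro t _
      exact ((hasDerivAt_pressureFin Φ (cube d n) t).neg.sub
        (hasDerivAt_halfsq c t)).hasDerivWithinAt
    · intro t _
      have hlin : HasDerivAt (fun s : ℝ => c*s) c t := by
        simpa using (hasDerivAt_id t).const_mul c
      have h := (hasDerivAt_P1 Φ (cube d n) t).neg.sub hlin
      have h2 : -(-(gibbsVar Φ (cube d n) t (Ham Φ (cube d n))) / ((cube d n).card:ℝ)) - c
          = gibbsVar Φ (cube d n) t (Ham Φ (cube d n)) / ((cube d n).card:ℝ) - c := by
        ring
      rw [h2] at h
      exact h.hasDerivWithinAt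
    · intro t ht
      rw [interior_Icc] at ht
      have := hvarbound n hn t ht.1.le ht.2.le
      linarith
  -- concavity of the limit
  have hconc : ConcaveOn ℝ (Set.Icc x y) (fun t => ψ t + c/2*t^2) := by
    refine ⟨convex_Icc x y, ?_⟩
    intro p hp q hq α β2 hα hβ2 hsum
    simp only [smul_eq_mul]
    have h1 : Tendsto (fun n => α * (pressureSeq Φ p n + c/2*p^2)
        + β2 * (pressureSeq Φ q n + c/2*q^2)) atTop
        (𝓝 (α * (ψ p + c/2*p^2) + β2 * (ψ q + c/2*q^2))) :=
      (((hψ p).add tendsto_const_nhds).const_mul α).add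
        (((hψ q).add tendsto_const_nhds).const_mul β2)
    have h2 : Tendsto (fun n => pressureSeq Φ (α*p+β2*q) n + c/2*(α*p+β2*q)^2) atTop
        (𝓝 (ψ (α*p+β2*q) + c/2*(α*p+β2*q)^2)) := (hψ _).add tendsto_const_nhds
    refine le_of_tendsto_of_tendsto h1 h2 ?_
    filter_upwards [eventually_ge_atTop (2*m)] with n hn
    have hcv := (hconcn n hn).2 hp hq hα hβ2 hsum
    simp only [smul_eq_mul] at hcv
    simp only [pressureSeq]
    linarith [hcv]
  -- conclude via slopes
  refine ⟨c, hcpos, ?_⟩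
  intro β₁ β₂ hβ₁ hβ₂ h12
  have hg1 : HasDerivAt (fun t => ψ t + c/2*t^2) (deriv ψ β₁ + c*β₁) β₁ :=
    ((hdiff β₁ (lt_of_lt_of_le hx hβ₁.1)).hasDerivAt).add (hasDerivAt_halfsq c β₁)
  have hg2 : HasDerivAt (fun t => ψ t + c/2*t^2) (deriv ψ β₂ + c*β₂) β₂ :=
    ((hdiff β₂ (lt_of_lt_of_le hx hβ₂.1)).hasDerivAt).add (hasDerivAt_halfsq c β₂)
  have hs1 := hconc.slope_le_of_hasDerivAt hβ₁ hβ₂ h12 hg1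
  have hs2 := hconc.le_slope_of_hasDerivAt hβ₁ hβ₂ h12 hg2
  linarith [hs1, hs2]

end Key


/-- **Theorem 4.4, part (iii)**: with `a < b` as in parts (i)-(ii) (so that `σ = s` on
`(a,b)` and `σ'`, `ψ'` are mutually inverse), for every `β > 0` with `u := ψ'(β)`:
there is a second-order phase transition at `β` (ψ differentiable, not twice
differentiable at β) iff `σ` is not twice differentiable at `u` or `σ''(u) = 0`;
moreover if both are twice differentiable then `ψ''(β)σ''(u) = 1`. -/
theorem thm44_iii {d : ℕ} (hd : 0 < d) {S : Type} [Fintype S] [Nonempty S]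
    (Φ : Pot d S) (hTI : TransInv Φ) (hAS : AbsSummable Φ)
    (hΦ0 : ∀ ω : Config S (∅ : Finset (Zd d)), Φ ∅ ω = 0)
    (hPC : PosCorr Φ)
    (hnc : ∃ (A₀ : Finset (Zd d)) (ω₁ ω₂ : Config S A₀), Φ A₀ ω₁ ≠ Φ A₀ ω₂)
    (ψ : ℝ → ℝ) (hψ : ∀ β : ℝ, Filter.Tendsto (pressureSeq Φ β) Filter.atTop (𝓝 (ψ β)))
    (hdiff : ∀ β : ℝ, 0 < β → DifferentiableAt ℝ ψ β)
    (a b : ℝ) (hab : a < b) (σR : ℝ → ℝ)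
    (hσ : ∀ u ∈ Set.Ioo a b,
      Filter.Tendsto (sigmaSeq Φ u) Filter.atTop (𝓝 ((σR u : ℝ) : EReal)))
    (hσdiff : ∀ u ∈ Set.Ioo a b, DifferentiableAt ℝ σR u)
    (hmaps1 : Set.MapsTo (deriv ψ) (Set.Ioi 0) (Set.Ioo a b))
    (hmaps2 : Set.MapsTo (deriv σR) (Set.Ioo a b) (Set.Ioi 0))
    (hinv1 : ∀ β ∈ Set.Ioi (0 : ℝ), deriv σR (deriv ψ β) = β)
    (hinv2 : ∀ u ∈ Set.Ioo a b, deriv ψ (deriv σR u) = u) :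
    ∀ β : ℝ, 0 < β →
      ((¬ DifferentiableAt ℝ (deriv ψ) β) ↔
        (¬ DifferentiableAt ℝ (deriv σR) (deriv ψ β) ∨
          deriv (deriv σR) (deriv ψ β) = 0)) ∧
      (DifferentiableAt ℝ (deriv ψ) β → DifferentiableAt ℝ (deriv σR) (deriv ψ β) →
        deriv (deriv ψ) β * deriv (deriv σR) (deriv ψ β) = 1) := by
  have key : ∀ {x y : ℝ}, 0 < x → x < y →
      ∃ c > 0, ∀ β₁ β₂, β₁ ∈ Set.Icc x y → β₂ ∈ Set.Icc x y → β₁ < β₂ →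
        deriv ψ β₂ + c * (β₂ - β₁) ≤ deriv ψ β₁ :=
    fun hx hxy => key_slope hTI hAS hPC hnc ψ hψ hdiff hx hxy
  -- strict antitonicity of ψ' on (0,∞)
  have hanti : StrictAntiOn (deriv ψ) (Set.Ioi (0:ℝ)) := by
    intro p hp q hq hpq
    obtain ⟨c, hc, hslope⟩ := key hp hpq
    have h := hslope p q ⟨le_refl p, hpq.le⟩ ⟨hpq.le, le_refl q⟩ hpq
    nlinarith
  -- strict antitonicity of σ' on (a,b)
  have hanti2 : StrictAntiOn (deriv σR) (Set.Ioo a b) := by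
    intro u₁ hu₁ u₂ hu₂ h12
    by_contra hcon
    push_neg at hcon
    rcases eq_or_lt_of_le hcon with heq | hlt
    · have : u₁ = u₂ := by rw [← hinv2 u₁ hu₁, ← hinv2 u₂ hu₂, heq]
      exact absurd this (ne_of_lt h12)
    · have h := hanti (hmaps2 hu₁) (hmaps2 hu₂) hlt
      rw [hinv2 u₁ hu₁, hinv2 u₂ hu₂] at h
      exact absurd h (not_lt.mpr h12.le)
  -- continuity of ψ' at positive points
  have hcontψ : ∀ β : ℝ, 0 < β → ContinuousAt (deriv ψ) β := by
    intro β hβ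
    have hmono : StrictMonoOn (fun t => -(deriv ψ t)) (Set.Ioi (0:ℝ)) := fun p hp q hq hpq =>
      neg_lt_neg (hanti hp hq hpq)
    have himgmem : (fun t => -(deriv ψ t)) '' (Set.Ioi 0) ∈ 𝓝 (-(deriv ψ β)) := by
      have hsub : Set.Ioo (-b) (-a) ⊆ (fun t => -(deriv ψ t)) '' (Set.Ioi 0) := by
        intro v hv
        have hv' : -v ∈ Set.Ioo a b := ⟨by linarith [hv.2], by linarith [hv.1]⟩
        refine ⟨deriv σR (-v), hmaps2 hv', ?_⟩
        show -(deriv ψ (deriv σR (-v))) = v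
        rw [hinv2 (-v) hv']
        ring
      have hmem := hmaps1 hβ
      exact Filter.mem_of_superset
        (isOpen_Ioo.mem_nhds ⟨neg_lt_neg hmem.2, neg_lt_neg hmem.1⟩) hsub
    have hc := hmono.continuousAt_of_image_mem_nhds (Ioi_mem_nhds hβ) himgmem
    have h2 := hc.neg
    convert h2 using 1
    funext t
    simp
  -- continuity of σ' on (a,b)
  have hcontσ : ∀ u ∈ Set.Ioo a b, ContinuousAt (deriv σR) u := by
    intro u hu
    have hmono : StrictMonoOn (fun v => -(deriv σR v)) (Set.Ioo a b) := fun p hp q hq hpq =>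
      neg_lt_neg (hanti2 hp hq hpq)
    have himgmem : (fun v => -(deriv σR v)) '' (Set.Ioo a b) ∈ 𝓝 (-(deriv σR u)) := by
      have hsub : Set.Iio (0:ℝ) ⊆ (fun v => -(deriv σR v)) '' (Set.Ioo a b) := by
        intro w hw
        have hw' : -w ∈ Set.Ioi (0:ℝ) := by
          simp only [Set.mem_Ioi]
          exact neg_pos.mpr (Set.mem_Iio.mp hw)
        refine ⟨deriv ψ (-w), hmaps1 hw', ?_⟩
        show -(deriv σR (deriv ψ (-w))) = w
        rw [hinv1 (-w) hw']
        ring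
      refine Filter.mem_of_superset (isOpen_Iio.mem_nhds ?_) hsub
      have := hmaps2 hu
      simpa using this
    have hc := hmono.continuousAt_of_image_mem_nhds (isOpen_Ioo.mem_nhds hu) himgmem
    have h2 := hc.neg
    convert h2 using 1
    funext t
    simp
  -- negativity of ψ'' where it exists
  have hψ'' : ∀ β : ℝ, 0 < β → DifferentiableAt ℝ (deriv ψ) β → deriv (deriv ψ) β < 0 := by
    intro β hβ hD
    obtain ⟨c, hc, hkey⟩ := key (half_pos hβ) (by linarith : β/2 < β + 1)
    have hslopet : Tendsto (slope (deriv ψ) β) (𝓝[≠] β) (𝓝 (deriv (deriv ψ) β)) :=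
      hasDerivAt_iff_tendsto_slope.mp hD.hasDerivAt
    have hbound : ∀ᶠ t in 𝓝[≠] β, slope (deriv ψ) β t ≤ -c := by
      have hmem : Set.Ioo (β/2) (β+1) ∈ 𝓝[≠] β :=
        mem_nhdsWithin_of_mem_nhds (isOpen_Ioo.mem_nhds ⟨by linarith, by linarith⟩)
      filter_upwards [hmem, self_mem_nhdsWithin] with t ht hne
      have htne : t ≠ β := hne
      rw [slope_def_field]
      rcases lt_or_gt_of_ne htne with hlt | hgt
      · have h := hkey t β ⟨ht.1.le, by linarith [ht.2]⟩ ⟨by linarith, by linarith⟩ hlt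
        rw [div_le_iff_of_neg (by linarith : t - β < 0)]
        linarith
      · have h := hkey β t ⟨by linarith, by linarith⟩ ⟨ht.1.le, ht.2.le⟩ hgt
        rw [div_le_iff₀ (by linarith : 0 < t - β)]
        linarith
    have hle := le_of_tendsto hslopet hbound
    linarith
  -- main statement
  intro β hβ
  have hu : deriv ψ β ∈ Set.Ioo a b := hmaps1 hβ
  have hβu : deriv σR (deriv ψ β) = β := hinv1 β hβ
  have hfgβ : ∀ᶠ t in 𝓝 β, deriv σR (deriv ψ t) = t :=
    Filter.eventually_of_mem (Ioi_mem_nhds hβ) (fun t ht => hinv1 t ht)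
  have hfgu : ∀ᶠ v in 𝓝 (deriv ψ β), deriv ψ (deriv σR v) = v :=
    Filter.eventually_of_mem (isOpen_Ioo.mem_nhds hu) (fun v hv => hinv2 v hv)
  have hprod : ∀ (_ : DifferentiableAt ℝ (deriv ψ) β)
      (_ : DifferentiableAt ℝ (deriv σR) (deriv ψ β)),
      deriv (deriv ψ) β * deriv (deriv σR) (deriv ψ β) = 1 := by
    intro h1 h2
    have hc2 : HasDerivAt (fun t => deriv σR (deriv ψ t))
        (deriv (deriv σR) (deriv ψ β) * deriv (deriv ψ) β) β :=
      (h2.hasDerivAt).comp β (h1.hasDerivAt)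
    have hid : HasDerivAt (fun t : ℝ => deriv σR (deriv ψ t)) 1 β :=
      (hasDerivAt_id β).congr_of_eventuallyEq hfgβ
    have h := hc2.unique hid
    rw [mul_comm]
    exact h
  refine ⟨⟨?_, ?_⟩, hprod⟩
  · intro hnd
    by_contra hcon
    push_neg at hcon
    obtain ⟨h2, hne⟩ := hcon
    have hder := HasDerivAt.of_local_left_inverse (hcontψ β hβ) (h2.hasDerivAt) hne hfgβ
    exact hnd hder.differentiableAt
  · intro hrhs hD
    have hψne : deriv (deriv ψ) β ≠ 0 := ne_of_lt (hψ'' β hβ hD)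
    have hσdiffu : DifferentiableAt ℝ (deriv σR) (deriv ψ β) := by
      have hf : HasDerivAt (deriv ψ) (deriv (deriv ψ) β) (deriv σR (deriv ψ β)) := by
        rw [hβu]
        exact hD.hasDerivAt
      exact (HasDerivAt.of_local_left_inverse (hcontσ _ hu) hf hψne hfgu).differentiableAt
    rcases hrhs with hnd2 | h0
    · exact hnd2 hσdiffu
    · have h := hprod hD hσdiffu
      rw [h0] at h
      simp at h
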